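/- For all trace-free A₁, A₂, A₃, A₄ ∈ SL(2,ℂ), the 4×4 complex matrix with entries −tr(A_p A_q) for 1 ≤ p, q ≤ 4 (whose diagonal entries are all 2) has determinant 0. (This is the rectangle relation (R), satisfied by every tuple of traces coming from trace-free SL(2,ℂ) matrices.) -/
import Mathlib
set_option maxHeartbeats 1600000

open Matrix

/-- Auxiliary: explicit expansion of a 4×4 determinant. -/
theorem det_fin_four'' (A : Matrix (Fin 4) (Fin 4) ℂ) : det A =
    A 0 0 * (A 1 1 * A 2 2 * A 3 3 - A 1 1 * A 2 3 * A 3 2 - A 1 2 * A 2 1 * A 3 3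
      + A 1 2 * A 2 3 * A 3 1 + A 1 3 * A 2 1 * A 3 2 - A 1 3 * A 2 2 * A 3 1)
  - A 0 1 * (A 1 0 * A 2 2 * A 3 3 - A 1 0 * A 2 3 * A 3 2 - A 1 2 * A 2 0 * A 3 3
      + A 1 2 * A 2 3 * A 3 0 + A 1 3 * A 2 0 * A 3 2 - A 1 3 * A 2 2 * A 3 0)
  + A 0 2 * (A 1 0 * A 2 1 * A 3 3 - A 1 0 * A 2 3 * A 3 1 - A 1 1 * A 2 0 * A 3 3
      + A 1 1 * A 2 3 * A 3 0 + A 1 3 * A 2 0 * A 3 1 - A 1 3 * A 2 1 * A 3 0)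
  - A 0 3 * (A 1 0 * A 2 1 * A 3 2 - A 1 0 * A 2 2 * A 3 1 - A 1 1 * A 2 0 * A 3 2
      + A 1 1 * A 2 2 * A 3 0 + A 1 2 * A 2 0 * A 3 1 - A 1 2 * A 2 1 * A 3 0) := by
  rw [Matrix.det_succ_row_zero, Fin.sum_univ_four]
  simp only [Matrix.det_fin_three, Matrix.submatrix_apply]
  norm_num [Fin.succAbove, Fin.lt_def,
    show (Fin.succ 2 : Fin 4) = 3 from rfl,
    show ((3 : Fin 4) : ℕ) = 3 from rfl,
    show (Fin.castSucc 2 : Fin 4) = 2 from rfl]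
  ring

/-- `SL(2,ℂ)`. -/
abbrev SL2C := Matrix.SpecialLinearGroup (Fin 2) ℂ

/-- The trace of an element of `SL(2,ℂ)`. -/
noncomputable def trSL2 (A : SL2C) : ℂ := Matrix.trace (A : Matrix (Fin 2) (Fin 2) ℂ)

/-- The rectangle relation (R): for trace-free `A₁, A₂, A₃, A₄ ∈ SL(2,ℂ)`, the
`4×4` matrix with entries `−tr(A_p A_q)` has determinant `0`. -/
theorem stmt8 (A : Fin 4 → SL2C) (hA : ∀ p, trSL2 (A p) = 0) :
    Matrix.det (Matrix.of fun p q : Fin 4 => -trSL2 (A p * A q)) = 0 := by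
  have hd : ∀ p, (A p : Matrix (Fin 2) (Fin 2) ℂ) 1 1 = -(A p : Matrix (Fin 2) (Fin 2) ℂ) 0 0 := by
    intro p
    have := hA p
    simp [trSL2, Matrix.trace_fin_two] at this
    linear_combination this
  have key : ∀ p q : Fin 4, trSL2 (A p * A q) =
      2 * (A p : Matrix (Fin 2) (Fin 2) ℂ) 0 0 * (A q : Matrix (Fin 2) (Fin 2) ℂ) 0 0
      + (A p : Matrix (Fin 2) (Fin 2) ℂ) 0 1 * (A q : Matrix (Fin 2) (Fin 2) ℂ) 1 0
      + (A p : Matrix (Fin 2) (Fin 2) ℂ) 1 0 * (A q : Matrix (Fin 2) (Fin 2) ℂ) 0 1 := by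
    intro p q
    simp [trSL2, Matrix.trace_fin_two, Matrix.SpecialLinearGroup.coe_mul,
      Matrix.mul_apply, Fin.sum_univ_two, hd]
    ring
  rw [det_fin_four'']
  simp only [Matrix.of_apply, key]
  ring
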